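/- For every fixed point combinator Y and every natural number n ≥ 0, the term B Y S^n I (B Y applied to n copies of S and then to I) is a fixed point combinator. -/

import Mathlib

/-- Untyped λ-terms in de Bruijn notation. -/
inductive Lam : Type
  | var : Nat → Lam
  | app : Lam → Lam → Lam
  | lam : Lam → Lam
  deriving DecidableEq

namespace Lam

/-- Lift (shift) free variables ≥ `d` by one. -/
def lift (d : Nat) : Lam → Lam
  | var n => if n < d then var n else var (n + 1)
  | app s t => app (lift d s) (lift d t)
  | lam t => lam (lift (d + 1) t)

/-- Capture-avoiding substitution of `u` for the variable with index `k`. -/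
def subst (k : Nat) (u : Lam) : Lam → Lam
  | var n => if n = k then u else if k < n then var (n - 1) else var n
  | app s t => app (subst k u s) (subst k u t)
  | lam t => lam (subst (k + 1) (lift 0 u) t)

/-- One-step β-reduction `→β` (compatible closure of the β-rule). -/
inductive Step : Lam → Lam → Prop
  | beta (t u : Lam) : Step (app (lam t) u) (subst 0 u t)
  | appL {s s' : Lam} (t : Lam) : Step s s' → Step (app s t) (app s' t)
  | appR (s : Lam) {t t' : Lam} : Step t t' → Step (app s t) (app s t')
  | lam {t t' : Lam} : Step t t' → Step (lam t) (lam t')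

/-- Many-step β-reduction `↠β`. -/
def Red : Lam → Lam → Prop := Relation.ReflTransGen Step

/-- β-convertibility `=β`. -/
def Conv : Lam → Lam → Prop := Relation.EqvGen Step

/-- `Y` is a fixed point combinator: `Y x =β x (Y x)` for a fresh variable `x`. -/
def isFPC (Y : Lam) : Prop :=
  Conv (app (lift 0 Y) (var 0)) (app (var 0) (app (lift 0 Y) (var 0)))

/-- `M P^n`: `M` applied to `n` copies of `P`. -/
def appIter (M P : Lam) : Nat → Lam
  | 0 => M
  | n + 1 => appIter (app M P) P n

/-- `I = λx.x` -/
def K_I : Lam := lam (var 0)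

/-- `S = λxyz.xz(yz)` -/
def K_S : Lam := lam (lam (lam (app (app (var 2) (var 0)) (app (var 1) (var 0)))))

/-- `B = λxyz.x(yz)` -/
def K_B : Lam := lam (lam (lam (app (var 2) (app (var 1) (var 0)))))

/-- `δ = λab.b(ab)` -/
def K_delta : Lam := lam (lam (app (var 0) (app (var 1) (var 0))))

/-- `ω_f = λx.f(xx)` (with `f` the variable bound just outside). -/
def K_omega : Lam := lam (app (var 1) (app (var 0) (var 0)))

/-- Curry's fpc `Y0 = λf.ω_f ω_f`. -/
def Y0 : Lam := lam (app K_omega K_omega)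

/-- `η = λxf.f(xxf)` -/
def K_eta : Lam := lam (lam (app (var 0) (app (app (var 1) (var 1)) (var 0))))

/-- Turing's fpc `Y1 = ηη`. -/
def Y1 : Lam := app K_eta K_eta

/-- One head reduction step: contraction of the head redex. -/
inductive Head : Lam → Lam → Prop
  | beta (t u : Lam) : Head (app (lam t) u) (subst 0 u t)
  | app {s s' : Lam} (t : Lam) : (∀ u, s ≠ lam u) → Head s s' → Head (app s t) (app s' t)
  | lam {t t' : Lam} : Head t t' → Head (lam t) (lam t')

/-- Exactly `k` head reduction steps. -/
def HeadN : Nat → Lam → Lam → Prop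
  | 0, s, t => s = t
  | k + 1, s, t => ∃ u, Head s u ∧ HeadN k u t

/-- Exactly `k` β-reduction steps. -/
def StepN : Nat → Lam → Lam → Prop
  | 0, s, t => s = t
  | k + 1, s, t => ∃ u, Step s u ∧ StepN k u t

theorem lift_lift (t : Lam) : ∀ d e, e ≤ d → lift e (lift d t) = lift (d+1) (lift e t) := by
  induction t with
  | var n =>
    intro d e h
    by_cases h1 : n < e
    · simp [lift, h1, show n < d by omega, show n < d+1 by omega]
    · by_cases h2 : n < d
      · simp [lift, h1, h2, show n+1 < d+1 by omega]
      · simp [lift, h1, h2, show ¬ n+1 < d+1 by omega, show ¬ n+1 < e by omega]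
  | app s t ihs iht => intro d e h; simp [lift, ihs _ _ h, iht _ _ h]
  | lam t ih => intro d e h; simp [lift, ih (d+1) (e+1) (by omega)]

theorem subst_lift (t : Lam) : ∀ k u, subst k u (lift k t) = t := by
  induction t with
  | var n =>
    intro k u
    by_cases h1 : n < k
    · simp [lift, subst, h1, show n ≠ k by omega, show ¬ k < n by omega]
    · simp [lift, subst, h1, show ¬ n + 1 = k by omega, show k < n + 1 by omega]
  | app s t ihs iht => intro k u; simp [lift, subst, ihs, iht]
  | lam t ih => intro k u; simp [lift, subst, ih]

theorem lift_subst (t : Lam) : ∀ k d u, d ≤ k → lift d (subst k u t) = subst (k+1) (lift d u) (lift d t) := by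
  induction t with
  | var n =>
    intro k d u h
    rcases eq_or_ne n k with rfl | hne
    · simp [subst, lift, show ¬ n < d by omega]
    · by_cases h1 : k < n
      · simp [subst, lift, hne, h1, show ¬ n - 1 < d by omega, show ¬ n < d by omega,
          show n+1 ≠ k+1 by omega, show k+1 < n+1 by omega, show n - 1 + 1 = n by omega]
      · by_cases h2 : n < d
        · simp [subst, lift, hne, h1, h2, show n ≠ k+1 by omega, show ¬ k+1 < n by omega]
        · simp [subst, lift, hne, h1, h2, show n+1 ≠ k+1 by omega, show ¬ k+1 < n+1 by omega]
  | app s t ihs iht => intro k d u h; simp [lift, subst, ihs _ _ _ h, iht _ _ _ h]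
  | lam t ih =>
    intro k d u h
    simp only [lift, subst]
    rw [ih (k+1) (d+1) _ (by omega), lift_lift u d 0 (by omega)]

theorem lift_subst' (t : Lam) : ∀ k d u, k ≤ d → lift d (subst k u t) = subst k (lift d u) (lift (d+1) t) := by
  induction t with
  | var n =>
    intro k d u h
    rcases eq_or_ne n k with rfl | hne
    · simp [subst, lift, show n < d + 1 by omega]
    · by_cases h1 : k < n
      · by_cases h2 : n - 1 < d
        · simp [subst, lift, hne, h1, h2, show n < d+1 by omega]
        · simp [subst, lift, hne, h1, h2, show ¬ n < d+1 by omega, show n+1 ≠ k by omega,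
            show k < n+1 by omega, show n+1-1 = n by omega, show n-1+1 = n by omega]
      · simp [subst, lift, hne, h1, show n < d by omega, show n < d+1 by omega]
  | app s t ihs iht => intro k d u h; simp [lift, subst, ihs _ _ _ h, iht _ _ _ h]
  | lam t ih =>
    intro k d u h
    simp only [lift, subst]
    rw [ih (k+1) (d+1) _ (by omega), lift_lift u d 0 (by omega)]

theorem subst_subst (t : Lam) : ∀ i j u v, i ≤ j →
    subst j u (subst i v t) = subst i (subst j u v) (subst (j+1) (lift i u) t) := by
  induction t with
  | var n =>
    intro i j u v h
    rcases eq_or_ne n i with rfl | hni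
    · simp [subst, show ¬ (n = j+1) by omega, show ¬ (j+1 < n) by omega]
    · rcases eq_or_ne n (j+1) with rfl | hnj
      · simp [subst, hni, show i < j+1 by omega, Nat.add_sub_cancel, subst_lift]
      · by_cases h1 : i < n
        · by_cases h2 : j+1 < n
          · simp [subst, hni, hnj, h1, h2, show n-1 ≠ j by omega, show j < n-1 by omega,
              show n-1 ≠ i by omega, show i < n-1 by omega]
          · simp [subst, hni, hnj, h1, h2, show n-1 ≠ j by omega, show ¬ j < n-1 by omega]
        · simp [subst, hni, hnj, h1, show n ≠ j by omega, show ¬ j < n by omega,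
            show ¬ j+1 < n by omega]
  | app s t ihs iht => intro i j u v h; simp [subst, ihs _ _ _ _ h, iht _ _ _ _ h]
  | lam t ih =>
    intro i j u v h
    simp only [subst]
    rw [ih (i+1) (j+1) _ _ (by omega), lift_subst v j 0 u (by omega),
      lift_lift u i 0 (by omega)]
theorem Step.subst_congr {s t : Lam} (h : Step s t) :
    ∀ k u, Step (subst k u s) (subst k u t) := by
  induction h with
  | beta t' u' =>
    intro k u
    have hb := Step.beta (subst (k+1) (lift 0 u) t') (subst k u u')
    rw [← subst_subst t' 0 k u u' (by omega)] at hb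
    simpa [subst] using hb
  | appL t' _ ih => intro k u; exact Step.appL _ (ih k u)
  | appR s' _ ih => intro k u; exact Step.appR _ (ih k u)
  | lam _ ih => intro k u; exact Step.lam (ih (k+1) (lift 0 u))

theorem Step.lift_congr {s t : Lam} (h : Step s t) :
    ∀ d, Step (lift d s) (lift d t) := by
  induction h with
  | beta t' u' =>
    intro d
    have hb := Step.beta (lift (d+1) t') (lift d u')
    rw [← lift_subst' t' 0 d u' (by omega)] at hb
    simpa [lift] using hb
  | appL t' _ ih => intro d; exact Step.appL _ (ih d)
  | appR s' _ ih => intro d; exact Step.appR _ (ih d)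
  | lam _ ih => intro d; exact Step.lam (ih (d+1))

namespace Conv

theorem refl (s : Lam) : Conv s s := Relation.EqvGen.refl s
theorem symm {s t : Lam} (h : Conv s t) : Conv t s := Relation.EqvGen.symm _ _ h
theorem trans {s t u : Lam} (h1 : Conv s t) (h2 : Conv t u) : Conv s u :=
  Relation.EqvGen.trans _ _ _ h1 h2

theorem map {f : Lam → Lam} (hf : ∀ a b, Step a b → Step (f a) (f b))
    {s t : Lam} (h : Conv s t) : Conv (f s) (f t) := by
  induction h with
  | rel a b hab => exact Relation.EqvGen.rel _ _ (hf _ _ hab)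
  | refl a => exact Conv.refl _
  | symm a b _ ih => exact ih.symm
  | trans a b c _ _ ih1 ih2 => exact ih1.trans ih2

theorem appL {s t : Lam} (u : Lam) (h : Conv s t) : Conv (app s u) (app t u) :=
  map (fun _ _ hs => Step.appL _ hs) h

theorem appR (u : Lam) {s t : Lam} (h : Conv s t) : Conv (app u s) (app u t) :=
  map (fun _ _ hs => Step.appR _ hs) h

theorem subst_congr (k : Nat) (u : Lam) {s t : Lam} (h : Conv s t) :
    Conv (subst k u s) (subst k u t) :=
  map (fun _ _ hs => hs.subst_congr k u) h

theorem lift_congr (d : Nat) {s t : Lam} (h : Conv s t) :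
    Conv (lift d s) (lift d t) :=
  map (fun _ _ hs => hs.lift_congr d) h

end Conv

theorem Step.conv {s t : Lam} (h : Step s t) : Conv s t := Relation.EqvGen.rel _ _ h

theorem Red.conv {s t : Lam} (h : Red s t) : Conv s t := by
  induction h with
  | refl => exact Conv.refl _
  | tail _ hst ih => exact ih.trans hst.conv

theorem redI (a : Lam) : Step (app K_I a) a := by
  have := Step.beta (var 0) a
  simpa [subst, K_I] using this

theorem redS (a b c : Lam) :
    Red (app (app (app K_S a) b) c) (app (app a c) (app b c)) := by
  have s1 : Step (app K_S a)
      (lam (lam (app (app (lift 1 (lift 0 a)) (var 0)) (app (var 1) (var 0))))) := by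
    have := Step.beta (lam (lam (app (app (var 2) (var 0)) (app (var 1) (var 0))))) a
    simp only [subst] at this
    rw [lift_lift a 0 0 (by omega)] at this
    simpa [subst, K_S] using this
  have s2 : Step (app (lam (lam (app (app (lift 1 (lift 0 a)) (var 0)) (app (var 1) (var 0))))) b)
      (lam (app (app (lift 0 a) (var 0)) (app (lift 0 b) (var 0)))) := by
    have := Step.beta (lam (app (app (lift 1 (lift 0 a)) (var 0)) (app (var 1) (var 0)))) b
    simpa [subst, subst_lift] using this
  have s3 : Step (app (lam (app (app (lift 0 a) (var 0)) (app (lift 0 b) (var 0)))) c)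
      (app (app a c) (app b c)) := by
    have := Step.beta (app (app (lift 0 a) (var 0)) (app (lift 0 b) (var 0))) c
    simpa [subst, subst_lift] using this
  exact Relation.ReflTransGen.head ((s1.appL b).appL c)
    (Relation.ReflTransGen.head (s2.appL c) (Relation.ReflTransGen.single s3))

theorem redB (a b c : Lam) :
    Red (app (app (app K_B a) b) c) (app a (app b c)) := by
  have s1 : Step (app K_B a)
      (lam (lam (app (lift 1 (lift 0 a)) (app (var 1) (var 0))))) := by
    have := Step.beta (lam (lam (app (var 2) (app (var 1) (var 0))))) a
    simp only [subst] at this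
    rw [lift_lift a 0 0 (by omega)] at this
    simpa [subst, K_B] using this
  have s2 : Step (app (lam (lam (app (lift 1 (lift 0 a)) (app (var 1) (var 0))))) b)
      (lam (app (lift 0 a) (app (lift 0 b) (var 0)))) := by
    have := Step.beta (lam (app (lift 1 (lift 0 a)) (app (var 1) (var 0)))) b
    simpa [subst, subst_lift] using this
  have s3 : Step (app (lam (app (lift 0 a) (app (lift 0 b) (var 0)))) c)
      (app a (app b c)) := by
    have := Step.beta (app (lift 0 a) (app (lift 0 b) (var 0))) c
    simpa [subst, subst_lift] using this
  exact Relation.ReflTransGen.head ((s1.appL b).appL c)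
    (Relation.ReflTransGen.head (s2.appL c) (Relation.ReflTransGen.single s3))
theorem lift_K_I : lift 0 K_I = K_I := by decide
theorem lift_K_S : lift 0 K_S = K_S := by decide
theorem lift_K_B : lift 0 K_B = K_B := by decide

theorem lift_appIter : ∀ (n : Nat) (M : Lam),
    lift 0 (appIter M K_S n) = appIter (lift 0 M) K_S n := by
  intro n
  induction n with
  | zero => intro M; rfl
  | succ n ih =>
    intro M
    simp only [appIter, ih]
    rw [show lift 0 (app M K_S) = app (lift 0 M) (lift 0 K_S) from rfl, lift_K_S]

theorem main_iter : ∀ (n : Nat) (Q : Lam),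
    (∀ M, lift 0 M = M → Conv (app Q M) (app (app K_S M) (app Q M))) →
    Conv (app (app (appIter Q K_S n) K_I) (var 0))
         (app (var 0) (app (app (appIter Q K_S n) K_I) (var 0))) := by
  intro n
  induction n with
  | zero =>
    intro Q hQ
    have c1 : Conv (app (app Q K_I) (var 0)) (app (app (app K_S K_I) (app Q K_I)) (var 0)) :=
      Conv.appL _ (hQ K_I lift_K_I)
    have c2 : Red (app (app (app K_S K_I) (app Q K_I)) (var 0))
        (app (app K_I (var 0)) (app (app Q K_I) (var 0))) := redS _ _ _
    have c3 : Conv (app (app K_I (var 0)) (app (app Q K_I) (var 0)))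
        (app (var 0) (app (app Q K_I) (var 0))) := ((redI (var 0)).appL _).conv
    exact (c1.trans c2.conv).trans c3
  | succ n ih =>
    intro Q hQ
    simp only [appIter]
    apply ih (app Q K_S)
    intro M hM
    have c1 : Conv (app (app Q K_S) M) (app (app (app K_S K_S) (app Q K_S)) M) :=
      Conv.appL _ (hQ K_S lift_K_S)
    have c2 : Red (app (app (app K_S K_S) (app Q K_S)) M)
        (app (app K_S M) (app (app Q K_S) M)) := redS _ _ _
    exact c1.trans c2.conv

/-- For every fpc `Y` and every `n ≥ 0`, the term `B Y S^n I` is an fpc. -/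
theorem BYSnI_isFPC : ∀ Y : Lam, isFPC Y → ∀ n : Nat, isFPC (app (appIter (app K_B Y) K_S n) K_I) := by
  intro Y hY n
  unfold isFPC at hY ⊢
  have hgoal_eq : lift 0 (app (appIter (app K_B Y) K_S n) K_I)
      = app (appIter (app K_B (lift 0 Y)) K_S n) K_I := by
    rw [show lift 0 (app (appIter (app K_B Y) K_S n) K_I)
        = app (lift 0 (appIter (app K_B Y) K_S n)) (lift 0 K_I) from rfl,
      lift_K_I, lift_appIter,
      show lift 0 (app K_B Y) = app (lift 0 K_B) (lift 0 Y) from rfl, lift_K_B]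
  rw [hgoal_eq]
  have hY' : ∀ N, Conv (app Y N) (app N (app Y N)) := by
    intro N
    have := hY.subst_congr 0 N
    simpa [subst, subst_lift] using this
  have HZ : ∀ N, lift 0 N = N → Conv (app (lift 0 Y) N) (app N (app (lift 0 Y) N)) := by
    intro N hN
    have := (hY' N).lift_congr 0
    simpa [lift, hN] using this
  cases n with
  | zero =>
    have r1 : Red (app (app (app K_B (lift 0 Y)) K_I) (var 0))
        (app (lift 0 Y) (app K_I (var 0))) := redB _ _ _
    have r2 : Conv (app (lift 0 Y) (app K_I (var 0))) (app (lift 0 Y) (var 0)) :=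
      Conv.appR _ (redI (var 0)).conv
    exact (r1.conv.trans r2).trans
      (hY.trans (Conv.appR (var 0) (r2.symm.trans r1.conv.symm)))
  | succ m =>
    simp only [appIter]
    apply main_iter m
    intro M hM
    have r1 : Red (app (app (app K_B (lift 0 Y)) K_S) M)
        (app (lift 0 Y) (app K_S M)) := redB _ _ _
    have h2 : Conv (app (lift 0 Y) (app K_S M))
        (app (app K_S M) (app (lift 0 Y) (app K_S M))) :=
      HZ (app K_S M) (by
        rw [show lift 0 (app K_S M) = app (lift 0 K_S) (lift 0 M) from rfl, lift_K_S, hM])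
    exact r1.conv.trans (h2.trans (Conv.appR _ r1.conv.symm))
end Lam
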